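/- arXiv:1911.04375 — 3 statements merged into one kernel-verified Lean document; each statement's English description precedes it below -/
import Mathlib

section
/- Let ρ∈(0,1) be irrational with all partial quotients a_n even, and write (ρ_n,α_n)=T^n(ρ,1/2) for n≥0, so that ρ_n=G^n(ρ). Then ρ_n<1/2 for all n≥1, and for all n≥1 one has α_n=ρ_n/2 if n is odd and α_n=1/2+ρ_n if n is even. In particular, if moreover a_n→∞, then α_{2i}→1/2 as i→∞. (Via the identification of renormalization trails with T-orbits, this is the content of Proposition 5.1 of the paper.) -/
noncomputable section

open Set Filter MeasureTheory Topology

/-- The Gauss map `G(ρ) = {1/ρ}`, `G(0) = 0`. -/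
def gaussMap (ρ : ℝ) : ℝ := if ρ = 0 then 0 else Int.fract (1 / ρ)

/-- The fiber maps `T_ρ : [-1,1] → [-1,1]` of the skew product. -/
def fiberMap (ρ α : ℝ) : ℝ :=
  if ρ = 0 then 0
  else if α ≤ 0 then -α
  else if α ≤ ρ * gaussMap ρ then -α / (ρ * gaussMap ρ)
  else Int.fract ((1 - α) / ρ)

/-- The skew product `T(ρ,α) = (G(ρ), T_ρ(α))`. -/
def skewProd (p : ℝ × ℝ) : ℝ × ℝ := (gaussMap p.1, fiberMap p.1 p.2)

/-- The rectangle `R = [0,1] × [-1,1]`. -/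
def Rect : Set (ℝ × ℝ) := Icc (0 : ℝ) 1 ×ˢ Icc (-1 : ℝ) 1

/-- `M = ([0,1] ∖ ℚ) × [-1,1]`. -/
def Mset : Set (ℝ × ℝ) := {p | p ∈ Rect ∧ Irrational p.1}

/-- The `n`-th partial quotient of the continued fraction expansion of `θ`:
`a_n(θ) = ⌊1 / Gⁿ(θ)⌋`. -/
def pquot (θ : ℝ) (n : ℕ) : ℕ := ⌊1 / gaussMap^[n] θ⌋₊

/-- The set `𝔼_∞` of irrational numbers in `(0,1)` all of whose partial quotients are even
and tend to infinity. -/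
def Einf : Set ℝ :=
  {θ | θ ∈ Ioo (0 : ℝ) 1 ∧ Irrational θ ∧ (∀ n, Even (pquot θ n)) ∧
    Tendsto (fun n => pquot θ n) atTop atTop}

lemma gauss_step (θ : ℝ) (h0 : 0 < θ) (hi : Irrational θ) :
    0 < gaussMap θ ∧ gaussMap θ < 1 ∧ Irrational (gaussMap θ) ∧
      1 / θ = (⌊1 / θ⌋₊ : ℝ) + gaussMap θ := by
  have hθ : θ ≠ 0 := h0.ne'
  have hinv : Irrational (1 / θ) := by rw [one_div]; exact hi.inv
  have hg : gaussMap θ = 1 / θ - ⌊1 / θ⌋ := by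
    rw [gaussMap, if_neg hθ, ← Int.self_sub_floor]
  have hcast : ((⌊1 / θ⌋₊ : ℝ)) = (⌊1 / θ⌋ : ℝ) :=
    natCast_floor_eq_intCast_floor (by positivity)
  refine ⟨?_, ?_, ?_, ?_⟩
  · rw [gaussMap, if_neg hθ, Int.fract_pos]
    exact fun h => hinv.ne_int _ h
  · rw [gaussMap, if_neg hθ]; exact Int.fract_lt_one _
  · rw [hg]; exact hinv.sub_intCast _
  · rw [hg, hcast]; ring

/-- **Proposition 5.1 (even-type rotation numbers).** If `ρ ∈ (0,1)` is irrational with all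
partial quotients even, then the orbit `(ρ_n, α_n) = Tⁿ(ρ, 1/2)` satisfies `ρ_n = Gⁿ(ρ)`,
`ρ_n < 1/2` for `n ≥ 1`, `α_n = ρ_n/2` for odd `n` and `α_n = 1/2 + ρ_n` for even `n ≥ 1`.
In particular, if moreover `a_n → ∞`, then `α_{2i} → 1/2`. -/
theorem evenType (ρ : ℝ) (hρ : ρ ∈ Ioo (0 : ℝ) 1) (hirr : Irrational ρ)
    (heven : ∀ n : ℕ, Even (pquot ρ n)) :
    (∀ n : ℕ, (skewProd^[n] (ρ, 1 / 2)).1 = gaussMap^[n] ρ) ∧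
    (∀ n : ℕ, 1 ≤ n → (skewProd^[n] (ρ, 1 / 2)).1 < 1 / 2) ∧
    (∀ n : ℕ, 1 ≤ n → Odd n →
      (skewProd^[n] (ρ, 1 / 2)).2 = (skewProd^[n] (ρ, 1 / 2)).1 / 2) ∧
    (∀ n : ℕ, 1 ≤ n → Even n →
      (skewProd^[n] (ρ, 1 / 2)).2 = 1 / 2 + (skewProd^[n] (ρ, 1 / 2)).1) ∧
    (Tendsto (fun n : ℕ => pquot ρ n) atTop atTop →
      Tendsto (fun i : ℕ => (skewProd^[2 * i] (ρ, 1 / 2)).2) atTop (𝓝 (1 / 2))) := by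
  set r : ℕ → ℝ := fun n => gaussMap^[n] ρ with hr
  -- basic facts about the Gauss orbit
  have key : ∀ n, 0 < r n ∧ r n < 1 ∧ Irrational (r n) := by
    intro n
    induction n with
    | zero => exact ⟨hρ.1, hρ.2, hirr⟩
    | succ n ih =>
      have := gauss_step (r n) ih.1 ih.2.2
      have hs : r (n + 1) = gaussMap (r n) := Function.iterate_succ_apply' _ _ _
      exact ⟨hs ▸ this.1, hs ▸ this.2.1, hs ▸ this.2.2.1⟩
  have id1 : ∀ n, 1 / r n = (pquot ρ n : ℝ) + r (n + 1) := by
    intro n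
    have := gauss_step (r n) (key n).1 (key n).2.2
    have hs : r (n + 1) = gaussMap (r n) := Function.iterate_succ_apply' _ _ _
    rw [hs]; exact this.2.2.2
  have hq2 : ∀ n, 2 ≤ pquot ρ n := by
    intro n
    have h1 : 1 ≤ pquot ρ n := by
      rw [pquot, Nat.one_le_floor_iff]
      have h0 := (key n).1
      have h1 := (key n).2.1
      rw [le_div_iff₀ h0]
      linarith
    obtain ⟨m, hm⟩ := heven n
    omega
  have half : ∀ n, r n < 1 / 2 := by
    intro n
    have h2 : (2 : ℝ) ≤ (pquot ρ n : ℝ) := by exact_mod_cast hq2 n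
    have hid := id1 n
    have hp := (key (n + 1)).1
    have h0 := (key n).1
    have h2' : 2 < 1 / r n := by linarith
    have := (lt_div_iff₀ h0).mp h2'
    linarith
  have halfg : ∀ n, gaussMap (r n) < 1 / 2 := by
    intro n
    have hs : r (n + 1) = gaussMap (r n) := Function.iterate_succ_apply' _ _ _
    rw [← hs]; exact half (n + 1)
  have fract_helper : ∀ (k : ℤ) (x y : ℝ), x = (k : ℝ) + y → 0 ≤ y → y < 1 →
      Int.fract x = y := by
    intro k x y hx h0 h1
    rw [hx, Int.fract_intCast_add, Int.fract_eq_self.mpr ⟨h0, h1⟩]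
  -- the orbit formula
  have orbit : ∀ n, skewProd^[n] (ρ, 1 / 2) =
      (r n, if n = 0 then 1 / 2 else if Odd n then r n / 2 else 1 / 2 + r n) := by
    intro n
    induction n with
    | zero => simp [hr]
    | succ n ih =>
      rw [Function.iterate_succ_apply', ih]
      have h0 := (key n).1
      have hlt := half n
      have hθ : r n ≠ 0 := h0.ne'
      have hg0 := (gauss_step (r n) h0 (key n).2.2).1
      have hg1 := halfg n
      have hs : r (n + 1) = gaussMap (r n) := Function.iterate_succ_apply' _ _ _
      obtain ⟨m, hm⟩ := heven n
      have hid : 1 / r n = 2 * (m : ℝ) + gaussMap (r n) := by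
        have := id1 n
        rw [hs] at this
        rw [this, hm]; push_cast; ring
      have hmul : 1 = (2 * (m : ℝ) + gaussMap (r n)) * r n := by
        rw [eq_comm, ← hid, mul_comm]
        field_simp
      -- compute the fiber coordinate
      have hhalf1 : fiberMap (r n) (1 / 2) = gaussMap (r n) / 2 := by
        rw [fiberMap, if_neg hθ, if_neg (by norm_num), if_neg (by nlinarith)]
        refine fract_helper (m : ℤ) _ _ ?_ (by linarith) (by linarith)
        rw [div_eq_iff hθ]
        push_cast
        nlinarith [hmul]
      have hhalf2 : fiberMap (r n) (1 / 2 + r n) = gaussMap (r n) / 2 := by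
        rw [fiberMap, if_neg hθ, if_neg (by linarith), if_neg (by nlinarith)]
        refine fract_helper ((m : ℤ) - 1) _ _ ?_ (by linarith) (by linarith)
        rw [div_eq_iff hθ]
        push_cast
        nlinarith [hmul]
      have hodd1 : fiberMap (r n) (r n / 2) = 1 / 2 + gaussMap (r n) := by
        rw [fiberMap, if_neg hθ, if_neg (by linarith), if_neg (by nlinarith)]
        refine fract_helper (2 * (m : ℤ) - 1) _ _ ?_ (by linarith) (by linarith)
        rw [div_eq_iff hθ]
        push_cast
        nlinarith [hmul]
      have hfib : fiberMap (r n)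
            (if n = 0 then 1 / 2 else if Odd n then r n / 2 else 1 / 2 + r n)
          = (if n + 1 = 0 then 1 / 2 else if Odd (n + 1) then r (n + 1) / 2
              else 1 / 2 + r (n + 1)) := by
        rcases Nat.eq_zero_or_pos n with hn0 | hnpos
        · subst hn0
          rw [if_pos rfl, if_neg (Nat.succ_ne_zero 0), hhalf1, hs, if_pos (Nat.odd_iff.mpr rfl : Odd (0 + 1))]
        · have hn0 : n ≠ 0 := hnpos.ne'
          rcases Nat.even_or_odd n with hne | hno
          · have hnotodd : ¬ Odd n := Nat.not_odd_iff_even.mpr hne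
            have hodd' : Odd (n + 1) := hne.add_one
            simp only [if_neg hn0, if_neg hnotodd, if_neg (Nat.succ_ne_zero n),
              if_pos hodd']
            rw [hhalf2, hs]
          · have hnotodd' : ¬ Odd (n + 1) := by
              simp [Nat.odd_add_one, Nat.not_even_iff_odd.mpr hno]
            simp only [if_neg hn0, if_pos hno, if_neg (Nat.succ_ne_zero n),
              if_neg hnotodd']
            rw [hodd1, hs]
      show (gaussMap (r n), fiberMap (r n) _) = _
      rw [Prod.mk.injEq]
      exact ⟨hs.symm, hfib⟩
  refine ⟨fun n => by rw [orbit n], fun n _ => by rw [orbit n]; exact half n, ?_, ?_, ?_⟩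
  · intro n hn hodd
    rw [orbit n]
    simp [Nat.one_le_iff_ne_zero.mp hn, hodd]
  · intro n hn heven'
    have hodd : ¬ Odd n := Nat.not_odd_iff_even.mpr heven'
    rw [orbit n]
    simp [Nat.one_le_iff_ne_zero.mp hn, hodd]
  · intro htend
    have h2i : Tendsto (fun i : ℕ => 2 * i) atTop atTop :=
      tendsto_atTop_atTop.mpr fun b => ⟨b, fun a ha => by omega⟩
    have hq : Tendsto (fun i : ℕ => ((pquot ρ (2 * i) : ℝ))) atTop atTop :=
      tendsto_natCast_atTop_atTop.comp (htend.comp h2i)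
    have hinv0 : Tendsto (fun i : ℕ => ((pquot ρ (2 * i) : ℝ))⁻¹) atTop (𝓝 0) :=
      hq.inv_tendsto_atTop
    have hbound : ∀ i : ℕ, r (2 * i) ≤ ((pquot ρ (2 * i) : ℝ))⁻¹ := by
      intro i
      have h0 := (key (2 * i)).1
      have hid := id1 (2 * i)
      have hp := (key (2 * i + 1)).1
      have h2 : (2 : ℝ) ≤ (pquot ρ (2 * i) : ℝ) := by exact_mod_cast hq2 (2 * i)
      rw [le_inv_comm₀ h0 (by linarith), ← one_div]
      linarith
    have hr0 : Tendsto (fun i : ℕ => r (2 * i)) atTop (𝓝 0) :=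
      squeeze_zero (fun i => (key (2 * i)).1.le) hbound hinv0
    have hlim : Tendsto (fun i : ℕ => 1 / 2 + r (2 * i)) atTop (𝓝 (1 / 2)) := by
      have := (tendsto_const_nhds :
        Tendsto (fun _ : ℕ => (1 : ℝ) / 2) atTop (𝓝 (1 / 2))).add hr0
      simpa using this
    apply hlim.congr'
    filter_upwards [eventually_ge_atTop 1] with i hi
    rw [orbit (2 * i)]
    have h1 : 2 * i ≠ 0 := by omega
    have h2 : ¬ Odd (2 * i) := by simp [Nat.even_mul]
    simp [h1, h2]
end
end

section
/- Let (θ_n)_{n≥0} be a sequence of irrational numbers in [0,1], and for n≥1 set Ψ_n = T_{θ₀}∘T_{θ₁}∘⋯∘T_{θ_{n−1}} : [−1,1]→[−1,1]. Then for every Borel set B⊆[−1,1] the sequence (λ(Ψ_n^{−1}(B)))_{n≥1} converges, where λ denotes Lebesgue measure on [−1,1]; moreover θ₀·G(θ₀)·λ(B) ≤ lim_{n→∞} λ(Ψ_n^{−1}(B)) ≤ (2−θ₀·G(θ₀))·λ(B). -/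
noncomputable section

open Set Filter MeasureTheory Topology

/-- The composition `Ψ_n = T_{θ₀} ∘ T_{θ₁} ∘ ⋯ ∘ T_{θ_{n-1}}`. -/
def fiberComp (θ : ℕ → ℝ) (n : ℕ) (x : ℝ) : ℝ :=
  (List.range n).foldr (fun j y => fiberMap (θ j) y) x

/-! ### Auxiliary lemmas -/

lemma meas_union_null' {α : Type*} [MeasurableSpace α] (μ : Measure α) {s t : Set α}
    (ht : μ t = 0) : μ (s ∪ t) = μ s :=
  le_antisymm ((measure_union_le s t).trans_eq (by rw [ht, add_zero]))
    (measure_mono subset_union_left)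

lemma gauss_facts {ρ : ℝ} (h0 : 0 < ρ) (h1 : ρ < 1) (hi : Irrational ρ) :
    ∃ a : ℕ, 1 ≤ a ∧ 1 - ρ * gaussMap ρ = ρ * a ∧ 0 < ρ * gaussMap ρ ∧
      ρ * gaussMap ρ ≤ 1 / 2 := by
  have hinv : (1:ℝ) < 1 / ρ := by rw [lt_div_iff₀ h0]; linarith
  have hii : Irrational (1 / ρ) := by simpa [one_div] using hi.inv
  have hfl : (1:ℤ) ≤ ⌊1 / ρ⌋ := by rw [Int.le_floor]; push_cast; linarith
  have hcast : ((⌊1 / ρ⌋.toNat : ℕ) : ℝ) = (⌊1 / ρ⌋ : ℝ) := by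
    exact_mod_cast Int.toNat_of_nonneg (by omega)
  have hfrpos : 0 < gaussMap ρ := by
    rw [gaussMap, if_neg h0.ne']
    exact Int.fract_pos.2 (by exact_mod_cast hii.ne_int ⌊1 / ρ⌋)
  have hkey : 1 - ρ * gaussMap ρ = ρ * ⌊1 / ρ⌋ := by
    rw [gaussMap, if_neg h0.ne', Int.fract]; field_simp; ring
  have hflt : 1 / ρ < ⌊1 / ρ⌋ + 1 := Int.lt_floor_add_one _
  have hρa1 : 1 < ρ * (⌊1 / ρ⌋ + 1) := by
    rw [div_lt_iff₀ h0] at hflt; linarith [hflt]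
  refine ⟨⌊1 / ρ⌋.toNat, by omega, by rw [hkey, hcast], by nlinarith [hfrpos], ?_⟩
  have ha1 : (1:ℝ) ≤ (⌊1 / ρ⌋ : ℝ) := by exact_mod_cast hfl
  nlinarith [hkey, hρa1, ha1, h0]

lemma fract_pre_Ico (A : Set ℝ) (k : ℤ) :
    Int.fract ⁻¹' A ∩ Ico (k:ℝ) (k+1) = (fun y : ℝ => y + -(k:ℝ)) ⁻¹' (A ∩ Ico 0 1) := by
  ext y
  simp only [mem_inter_iff, mem_preimage, mem_Ico]
  constructor
  · rintro ⟨hA, hy1, hy2⟩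
    have hfl : ⌊y⌋ = k := Int.floor_eq_iff.2 ⟨hy1, hy2⟩
    have : Int.fract y = y + -(k:ℝ) := by rw [Int.fract, hfl]; ring
    exact ⟨this ▸ hA, by linarith, by linarith⟩
  · rintro ⟨hA, hy1, hy2⟩
    have h1' : (k:ℝ) ≤ y := by linarith
    have h2' : y < k + 1 := by linarith
    have hfl : ⌊y⌋ = k := Int.floor_eq_iff.2 ⟨h1', h2'⟩
    have : Int.fract y = y + -(k:ℝ) := by rw [Int.fract, hfl]; ring
    exact ⟨this ▸ hA, h1', h2'⟩

lemma fract_vol_unit (A : Set ℝ) (k : ℤ) :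
    volume (Int.fract ⁻¹' A ∩ Ico (k:ℝ) (k+1)) = volume (A ∩ Ico 0 1) := by
  rw [fract_pre_Ico, measure_preimage_add_right]

lemma fract_vol (A : Set ℝ) (hA : MeasurableSet A) (a : ℕ) :
    volume (Int.fract ⁻¹' A ∩ Ico (0:ℝ) a) = a * volume (A ∩ Ico 0 1) := by
  induction a with
  | zero => simp
  | succ a ih =>
    have hsplit : Ico (0:ℝ) (a+1) = Ico (0:ℝ) a ∪ Ico (a:ℝ) (a+1) :=
      (Ico_union_Ico_eq_Ico (by positivity) (by linarith [Nat.cast_nonneg (α := ℝ) a])).symm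
    have hmeas : MeasurableSet (Int.fract ⁻¹' A ∩ Ico (a:ℝ) (a+1)) :=
      (measurable_fract hA).inter measurableSet_Ico
    have hdisj : Disjoint (Int.fract ⁻¹' A ∩ Ico (0:ℝ) a) (Int.fract ⁻¹' A ∩ Ico (a:ℝ) (a+1)) :=
      (Set.Ico_disjoint_Ico_same.mono inter_subset_right inter_subset_right)
    have hcast : ((a:ℤ):ℝ) = (a:ℝ) := by push_cast; ring
    calc volume (Int.fract ⁻¹' A ∩ Ico (0:ℝ) ((a:ℕ)+1 : ℕ))
        = volume (Int.fract ⁻¹' A ∩ Ico (0:ℝ) a ∪ Int.fract ⁻¹' A ∩ Ico (a:ℝ) (a+1)) := by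
          push_cast; rw [hsplit, inter_union_distrib_left]
      _ = volume (Int.fract ⁻¹' A ∩ Ico (0:ℝ) a) + volume (Int.fract ⁻¹' A ∩ Ico (a:ℝ) (a+1)) :=
          measure_union hdisj hmeas
      _ = a * volume (A ∩ Ico 0 1) + volume (A ∩ Ico 0 1) := by
          rw [ih]; congr 1; rw [← hcast]; exact fract_vol_unit A (a:ℤ)
      _ = (a+1 : ℕ) * volume (A ∩ Ico 0 1) := by push_cast; ring

lemma preimage_decomp {ρ : ℝ} (h0 : 0 < ρ) (hc : 0 < ρ * gaussMap ρ)
    (hc1 : ρ * gaussMap ρ ≤ 1) (A : Set ℝ) :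
    {x ∈ Icc (-1:ℝ) 1 | fiberMap ρ x ∈ A} =
      (Icc (-1:ℝ) 0 ∩ (fun x => -x) ⁻¹' A) ∪
      (Ioc 0 (ρ * gaussMap ρ) ∩ (fun x => -x / (ρ * gaussMap ρ)) ⁻¹' A) ∪
      (Ioc (ρ * gaussMap ρ) 1 ∩ (fun x => Int.fract ((1 - x)/ρ)) ⁻¹' A) := by
  ext x
  simp only [mem_setOf_eq, mem_union, mem_inter_iff, mem_preimage, mem_Icc, mem_Ioc,
    fiberMap, if_neg h0.ne']
  constructor
  · rintro ⟨⟨hx1, hx2⟩, hfx⟩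
    by_cases h1 : x ≤ 0
    · left; left; rw [if_pos h1] at hfx; exact ⟨⟨hx1, h1⟩, hfx⟩
    · rw [if_neg h1] at hfx
      by_cases h2 : x ≤ ρ * gaussMap ρ
      · left; right; rw [if_pos h2] at hfx; exact ⟨⟨lt_of_not_ge h1, h2⟩, hfx⟩
      · right; rw [if_neg h2] at hfx; exact ⟨⟨lt_of_not_ge h2, hx2⟩, hfx⟩
  · rintro ((⟨⟨hx1, hx2⟩, hfx⟩ | ⟨⟨hx1, hx2⟩, hfx⟩) | ⟨⟨hx1, hx2⟩, hfx⟩)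
    · exact ⟨⟨hx1, by linarith⟩, by rw [if_pos hx2]; exact hfx⟩
    · refine ⟨⟨by linarith, by linarith⟩, ?_⟩
      rw [if_neg (by linarith), if_pos hx2]; exact hfx
    · refine ⟨⟨by linarith [hc], hx2⟩, ?_⟩
      rw [if_neg (by linarith), if_neg (by linarith)]; exact hfx

/-- One-step transfer of the positive/negative part measures. -/
lemma step_lemma {ρ : ℝ} (h0 : 0 < ρ) (h1 : ρ < 1) (hi : Irrational ρ)
    (A : Set ℝ) (hA : MeasurableSet A) (hAs : A ⊆ Icc (-1:ℝ) 1) :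
    MeasurableSet {x ∈ Icc (-1:ℝ) 1 | fiberMap ρ x ∈ A} ∧
    volume ({x ∈ Icc (-1:ℝ) 1 | fiberMap ρ x ∈ A} ∩ Ici 0)
      = ENNReal.ofReal (ρ * gaussMap ρ) * volume (A ∩ Iio 0)
        + ENNReal.ofReal (1 - ρ * gaussMap ρ) * volume (A ∩ Ici 0) ∧
    volume ({x ∈ Icc (-1:ℝ) 1 | fiberMap ρ x ∈ A} ∩ Iio 0) = volume (A ∩ Ici 0) := by
  obtain ⟨a, ha1, hac, hc, hc2⟩ := gauss_facts h0 h1 hi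
  set c : ℝ := ρ * gaussMap ρ with hc_def
  have hc1 : c ≤ 1 := by linarith
  have hdecomp := preimage_decomp h0 hc hc1 A
  set S1 : Set ℝ := Icc (-1:ℝ) 0 ∩ (fun x => -x) ⁻¹' A with hS1
  set S2 : Set ℝ := Ioc 0 c ∩ (fun x => -x / c) ⁻¹' A with hS2
  set S3 : Set ℝ := Ioc c 1 ∩ (fun x => Int.fract ((1 - x)/ρ)) ⁻¹' A with hS3
  have hm1 : MeasurableSet S1 := measurableSet_Icc.inter (measurable_neg hA)
  have hm2 : MeasurableSet S2 :=
    measurableSet_Ioc.inter ((measurable_id.neg.div_const c) hA)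
  have hm3 : MeasurableSet S3 :=
    measurableSet_Ioc.inter (((measurable_const.sub measurable_id).div_const ρ).fract hA)
  -- set identities using A ⊆ [-1,1]
  have hAIco : A ∩ Ico (-1) 0 = A ∩ Iio 0 := by
    ext x; simp only [mem_inter_iff, mem_Ico, mem_Iio]
    exact ⟨fun ⟨h, _, h2⟩ => ⟨h, h2⟩, fun ⟨h, h2⟩ => ⟨h, (hAs h).1, h2⟩⟩
  have hvol01 : volume (A ∩ Ico 0 1) = volume (A ∩ Ici 0) := by
    have : A ∩ Ici 0 = (A ∩ Ico 0 1) ∪ (A ∩ {1}) := by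
      ext x; simp only [mem_inter_iff, mem_Ico, mem_Ici, mem_union, mem_singleton_iff]
      constructor
      · rintro ⟨h, h0x⟩
        rcases lt_or_eq_of_le (hAs h).2 with h' | h'
        · exact Or.inl ⟨h, h0x, h'⟩
        · exact Or.inr ⟨h, h'⟩
      · rintro (⟨h, h0x, _⟩ | ⟨h, hx⟩)
        · exact ⟨h, h0x⟩
        · exact ⟨h, by rw [hx]; norm_num⟩
    rw [this, meas_union_null' _ (measure_mono_null inter_subset_right Real.volume_singleton)]
  have hvolIoc : volume (A ∩ Ioc 0 1) = volume (A ∩ Ici 0) := by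
    have : A ∩ Ici 0 = (A ∩ Ioc 0 1) ∪ (A ∩ {0}) := by
      ext x; simp only [mem_inter_iff, mem_Ioc, mem_Ici, mem_union, mem_singleton_iff]
      constructor
      · rintro ⟨h, h0x⟩
        rcases lt_or_eq_of_le h0x with h' | h'
        · exact Or.inl ⟨h, h', (hAs h).2⟩
        · exact Or.inr ⟨h, h'.symm⟩
      · rintro (⟨h, h0x, _⟩ | ⟨h, hx⟩)
        · exact ⟨h, h0x.le⟩
        · exact ⟨h, by rw [hx]⟩
    rw [this, meas_union_null' _ (measure_mono_null inter_subset_right Real.volume_singleton)]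
  -- volume of S2
  have hvolS2 : volume S2 = ENNReal.ofReal c * volume (A ∩ Iio 0) := by
    have hset : S2 = ((-c⁻¹) * ·) ⁻¹' (A ∩ Ico (-1) 0) := by
      rw [hS2]; ext x
      simp only [mem_inter_iff, mem_preimage, mem_Ioc, mem_Ico]
      have he : -c⁻¹ * x = -x / c := by field_simp
      rw [he]
      constructor
      · rintro ⟨⟨h1', h2⟩, h3⟩
        refine ⟨h3, ?_, ?_⟩
        · rw [le_div_iff₀ hc]; linarith
        · rw [div_lt_iff₀ hc]; linarith
      · rintro ⟨h3, h1', h2⟩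
        rw [le_div_iff₀ hc] at h1'
        rw [div_lt_iff₀ hc] at h2
        exact ⟨⟨by linarith, by linarith⟩, h3⟩
    rw [hset, Real.volume_preimage_mul_left
      (by intro h; apply hc.ne'; field_simp at h; norm_num at h : (-c⁻¹ : ℝ) ≠ 0), hAIco]
    congr 1
    have h2 : ((-c⁻¹)⁻¹ : ℝ) = -c := by field_simp
    rw [h2, abs_neg, abs_of_pos hc]
  -- volume of S3
  have hvolS3 : volume S3 = ENNReal.ofReal (1 - c) * volume (A ∩ Ici 0) := by
    have hset : S3 = (fun x => (1 - x)/ρ) ⁻¹' (Int.fract ⁻¹' A ∩ Ico 0 (a:ℝ)) := by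
      rw [hS3]; ext x
      simp only [mem_inter_iff, mem_preimage, mem_Ioc, mem_Ico]
      constructor
      · rintro ⟨⟨h1', h2⟩, h3⟩
        refine ⟨h3, ?_, ?_⟩
        · apply div_nonneg (by linarith) h0.le
        · rw [div_lt_iff₀ h0]; nlinarith
      · rintro ⟨h3, h1', h2⟩
        rw [le_div_iff₀ h0] at h1'
        rw [div_lt_iff₀ h0] at h2
        exact ⟨⟨by nlinarith, by nlinarith⟩, h3⟩
    have hfun : (fun x : ℝ => (1 - x)/ρ) = (fun y => y + ρ⁻¹) ∘ ((-ρ⁻¹) * ·) := by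
      funext x; simp only [Function.comp_apply]; ring
    rw [hset, hfun, preimage_comp,
      Real.volume_preimage_mul_left (by intro h; apply h0.ne'; field_simp at h; norm_num at h : (-ρ⁻¹ : ℝ) ≠ 0),
      measure_preimage_add_right, fract_vol A hA a, hvol01]
    have h2 : ((-ρ⁻¹)⁻¹ : ℝ) = -ρ := by field_simp
    rw [h2, abs_neg, abs_of_pos h0, ← mul_assoc]
    congr 1
    rw [hac, ← ENNReal.ofReal_natCast a, ← ENNReal.ofReal_mul h0.le]
  -- measurability
  have hmeas : MeasurableSet {x ∈ Icc (-1:ℝ) 1 | fiberMap ρ x ∈ A} := by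
    rw [hdecomp]; exact (hm1.union hm2).union hm3
  refine ⟨hmeas, ?_, ?_⟩
  · -- positive part
    have hposset : {x ∈ Icc (-1:ℝ) 1 | fiberMap ρ x ∈ A} ∩ Ici 0
        = (S2 ∪ S3) ∪ (({0} : Set ℝ) ∩ (fun x : ℝ => -x) ⁻¹' A) := by
      rw [hdecomp]
      ext x
      simp only [mem_inter_iff, mem_union, mem_Icc, mem_Ioc, mem_Ici, mem_preimage,
        mem_singleton_iff, hS1, hS2, hS3]
      constructor
      · rintro ⟨(⟨⟨hx1, hx2⟩, hfx⟩ | h) | h, hx0⟩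
        · right; exact ⟨le_antisymm hx2 hx0, hfx⟩
        · left; left; exact h
        · left; right; exact h
      · rintro ((⟨⟨hx1, hx2⟩, hfx⟩ | ⟨⟨hx1, hx2⟩, hfx⟩) | ⟨hx, hfx⟩)
        · exact ⟨Or.inl (Or.inr ⟨⟨hx1, hx2⟩, hfx⟩), hx1.le⟩
        · exact ⟨Or.inr ⟨⟨hx1, hx2⟩, hfx⟩, by linarith [hc]⟩
        · exact ⟨Or.inl (Or.inl ⟨⟨by rw [hx]; norm_num, hx.le⟩, hfx⟩), by rw [hx]⟩
    have hdisj23 : Disjoint S2 S3 :=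
      (Set.Ioc_disjoint_Ioc_of_le le_rfl).mono inter_subset_left inter_subset_left
    rw [hposset,
      meas_union_null' _ (measure_mono_null inter_subset_left Real.volume_singleton),
      measure_union hdisj23 hm3, hvolS2, hvolS3]
  · -- negative part
    have hnegset : {x ∈ Icc (-1:ℝ) 1 | fiberMap ρ x ∈ A} ∩ Iio 0
        = (fun x : ℝ => -x) ⁻¹' (A ∩ Ioc 0 1) := by
      rw [hdecomp]
      ext x
      simp only [mem_inter_iff, mem_union, mem_Icc, mem_Ioc, mem_Iio, mem_preimage,
        hS1, hS2, hS3]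
      constructor
      · rintro ⟨(⟨⟨hx1, hx2⟩, hfx⟩ | ⟨⟨hx1, hx2⟩, hfx⟩) | ⟨⟨hx1, hx2⟩, hfx⟩, hx0⟩
        · exact ⟨hfx, by linarith, by linarith⟩
        · linarith
        · linarith [hc]
      · rintro ⟨hfx, h1', h2⟩
        exact ⟨Or.inl (Or.inl ⟨⟨by linarith, by linarith⟩, hfx⟩), by linarith⟩
    have : (fun x : ℝ => -x) ⁻¹' (A ∩ Ioc 0 1) = -(A ∩ Ioc 0 1) := rfl
    rw [hnegset, this, MeasureTheory.Measure.measure_neg, hvolIoc]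

lemma seq_limit (c p q : ℕ → ℝ)
    (hc0 : ∀ n, 0 < c n) (hc2 : ∀ n, c n ≤ 1/2)
    (hp : ∀ n, 0 ≤ p n) (hq : ∀ n, 0 ≤ q n)
    (hrec : ∀ n, p (n+1) = c n * q n + (1 - c n) * p n)
    (hqrec : ∀ n, q (n+1) = p n) :
    ∃ L, Tendsto (fun n => p n + q n) atTop (𝓝 L) ∧
      c 0 * (p 0 + q 0) ≤ L ∧ L ≤ (2 - c 0) * (p 0 + q 0) := by
  set d : ℕ → ℝ := fun n => p n - q n with hd_def
  set f : ℕ → ℝ := fun n => (1 - c n) * d n with hf_def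
  have hd : ∀ n, d (n+1) = -(c n * d n) := by
    intro n; simp only [hd_def]; rw [hrec n, hqrec n]; ring
  have hdb : ∀ n, |d n| ≤ |d 0| * (1/2)^n := by
    intro n; induction n with
    | zero => simp
    | succ n ih =>
      rw [hd n, abs_neg, abs_mul, abs_of_pos (hc0 n)]
      calc c n * |d n| ≤ (1/2) * (|d 0| * (1/2)^n) :=
            mul_le_mul (hc2 n) ih (abs_nonneg _) (by norm_num)
        _ = |d 0| * (1/2)^(n+1) := by ring
  have hfb : ∀ n, |f n| ≤ |d 0| * (1/2)^n := by
    intro n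
    have h1 : |f n| = |1 - c n| * |d n| := abs_mul _ _
    have h2 : |1 - c n| ≤ 1 := abs_le.2 ⟨by linarith [hc0 n, hc2 n], by linarith [hc0 n]⟩
    calc |f n| = |1 - c n| * |d n| := h1
      _ ≤ 1 * (|d 0| * (1/2)^n) :=
          mul_le_mul h2 (hdb n) (abs_nonneg _) zero_le_one
      _ = |d 0| * (1/2)^n := one_mul _
  have hsum : Summable f := by
    apply Summable.of_abs
    apply Summable.of_nonneg_of_le (fun n => abs_nonneg _) hfb
    exact (summable_geometric_of_lt_one (by norm_num) (by norm_num)).mul_left _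
  have hs : ∀ n, p n + q n = (p 0 + q 0) + ∑ k ∈ Finset.range n, f k := by
    intro n; induction n with
    | zero => simp
    | succ n ih =>
      rw [Finset.sum_range_succ, ← add_assoc, ← ih, hrec n, hqrec n]
      simp only [hf_def, hd_def]; ring
  have key : ∀ m n,
      (0 ≤ d n → 0 ≤ ∑ k ∈ Finset.range m, f (n+k) ∧
        ∑ k ∈ Finset.range m, f (n+k) ≤ (1 - c n) * d n) ∧
      (d n ≤ 0 → (1 - c n) * d n ≤ ∑ k ∈ Finset.range m, f (n+k) ∧
        ∑ k ∈ Finset.range m, f (n+k) ≤ 0) := by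
    intro m; induction m with
    | zero =>
      intro n; simp only [Finset.range_zero, Finset.sum_empty]
      constructor
      · intro h; exact ⟨le_refl 0, mul_nonneg (by linarith [hc2 n]) h⟩
      · intro h; exact ⟨mul_nonpos_of_nonneg_of_nonpos (by linarith [hc2 n]) h, le_refl 0⟩
    | succ m ih =>
      intro n
      have hsplit : ∑ k ∈ Finset.range (m+1), f (n+k)
          = f n + ∑ k ∈ Finset.range m, f ((n+1)+k) := by
        rw [Finset.sum_range_succ']
        simp only [Nat.add_zero]
        rw [add_comm]
        congr 1
        apply Finset.sum_congr rfl
        intro k _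
        congr 1
        omega
      obtain ⟨ihp, ihn⟩ := ih (n+1)
      have hfn : f n = (1 - c n) * d n := rfl
      constructor
      · intro hdn
        have hdn1 : d (n+1) ≤ 0 := by rw [hd n]; nlinarith [hc0 n]
        obtain ⟨hl, hu⟩ := ihn hdn1
        rw [hd n] at hl
        constructor
        · rw [hsplit, hfn]
          nlinarith [hc0 n, hc2 n, hc0 (n+1), hc2 (n+1),
            mul_nonneg (hc0 n).le hdn,
            mul_nonneg (mul_nonneg (hc0 (n+1)).le (hc0 n).le) hdn,
            mul_nonneg (show (0:ℝ) ≤ 1 - 2*c n by linarith [hc2 n]) hdn]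
        · rw [hsplit, hfn]; linarith [hu]
      · intro hdn
        have hdn1 : 0 ≤ d (n+1) := by rw [hd n]; nlinarith [hc0 n]
        obtain ⟨hl, hu⟩ := ihp hdn1
        rw [hd n] at hu
        constructor
        · rw [hsplit, hfn]; linarith [hl]
        · rw [hsplit, hfn]
          nlinarith [hc0 n, hc2 n, hc0 (n+1), hc2 (n+1),
            mul_nonneg (hc0 n).le (neg_nonneg.2 hdn),
            mul_nonneg (mul_nonneg (hc0 (n+1)).le (hc0 n).le) (neg_nonneg.2 hdn),
            mul_nonneg (show (0:ℝ) ≤ 1 - 2*c n by linarith [hc2 n]) (neg_nonneg.2 hdn)]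
  have hT : Tendsto (fun m => ∑ k ∈ Finset.range m, f k) atTop (𝓝 (∑' k, f k)) :=
    hsum.hasSum.tendsto_sum_nat
  have hzero : ∀ m, ∑ k ∈ Finset.range m, f (0+k) = ∑ k ∈ Finset.range m, f k := by
    intro m; apply Finset.sum_congr rfl; intro k _; congr 1; omega
  refine ⟨(p 0 + q 0) + ∑' k, f k, ?_, ?_, ?_⟩
  · exact (tendsto_const_nhds.add hT).congr fun n => (hs n).symm
  · -- lower bound
    rcases le_total 0 (d 0) with hd0 | hd0
    · have hlb : 0 ≤ ∑' k, f k := ge_of_tendsto hT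
        (Eventually.of_forall fun m => by rw [← hzero m]; exact ((key m 0).1 hd0).1)
      nlinarith [hp 0, hq 0, hc0 0, hc2 0,
        mul_nonneg (show (0:ℝ) ≤ 1 - c 0 by linarith [hc2 0]) (add_nonneg (hp 0) (hq 0))]
    · have hlb : (1 - c 0) * d 0 ≤ ∑' k, f k := ge_of_tendsto hT
        (Eventually.of_forall fun m => by rw [← hzero m]; exact ((key m 0).2 hd0).1)
      have hdge : -(p 0 + q 0) ≤ d 0 := by simp only [hd_def]; linarith [hp 0]
      nlinarith [hp 0, hq 0, hc0 0, hc2 0,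
        mul_le_mul_of_nonneg_left hdge (show (0:ℝ) ≤ 1 - c 0 by linarith [hc2 0])]
  · -- upper bound
    rcases le_total 0 (d 0) with hd0 | hd0
    · have hub : ∑' k, f k ≤ (1 - c 0) * d 0 := le_of_tendsto hT
        (Eventually.of_forall fun m => by rw [← hzero m]; exact ((key m 0).1 hd0).2)
      have hdle : d 0 ≤ p 0 + q 0 := by simp only [hd_def]; linarith [hq 0]
      nlinarith [hp 0, hq 0, hc0 0, hc2 0,
        mul_le_mul_of_nonneg_left hdle (show (0:ℝ) ≤ 1 - c 0 by linarith [hc2 0])]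
    · have hub : ∑' k, f k ≤ 0 := le_of_tendsto hT
        (Eventually.of_forall fun m => by rw [← hzero m]; exact ((key m 0).2 hd0).2)
      nlinarith [hp 0, hq 0, hc0 0, hc2 0,
        mul_nonneg (show (0:ℝ) ≤ 1 - c 0 by linarith [hc2 0]) (add_nonneg (hp 0) (hq 0))]

lemma fiberMap_mem {ρ : ℝ} (h0 : 0 < ρ) (h1 : ρ < 1) (hi : Irrational ρ) {x : ℝ}
    (hx : x ∈ Icc (-1:ℝ) 1) : fiberMap ρ x ∈ Icc (-1:ℝ) 1 := by
  obtain ⟨a, ha1, hac, hc, hc2⟩ := gauss_facts h0 h1 hi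
  obtain ⟨hx1, hx2⟩ := hx
  rw [fiberMap, if_neg h0.ne']
  split_ifs with ha hb
  · constructor <;> [linarith; linarith]
  · constructor
    · rw [le_div_iff₀ hc]  -- -1 ≤ -x / c ?
      linarith
    · rw [div_le_iff₀ hc]
      linarith
  · constructor
    · linarith [Int.fract_nonneg ((1 - x)/ρ)]
    · exact (Int.fract_lt_one _).le

lemma fiberComp_succ (θ : ℕ → ℝ) (n : ℕ) (x : ℝ) :
    fiberComp θ (n+1) x = fiberComp θ n (fiberMap (θ n) x) := by
  unfold fiberComp
  rw [List.range_succ, List.foldr_append]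
  rfl

/-- **Lemma A.2.** For any sequence of irrationals `θ_n ⊆ [0,1]` and any Borel set
`B ⊆ [-1,1]`, the sequence `λ(Ψ_n⁻¹(B))` converges, and its limit `L` satisfies
`θ₀G(θ₀)·λ(B) ≤ L ≤ (2 - θ₀G(θ₀))·λ(B)`. -/
theorem fiberCompMeasureLimit (θ : ℕ → ℝ) (hθ : ∀ n, θ n ∈ Icc (0 : ℝ) 1)
    (hirr : ∀ n, Irrational (θ n))
    (B : Set ℝ) (hBm : MeasurableSet B) (hBsub : B ⊆ Icc (-1 : ℝ) 1) :
    ∃ L : ℝ,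
      Tendsto (fun n : ℕ =>
          (volume {x ∈ Icc (-1 : ℝ) 1 | fiberComp θ n x ∈ B}).toReal) atTop (𝓝 L) ∧
      θ 0 * gaussMap (θ 0) * (volume B).toReal ≤ L ∧
      L ≤ (2 - θ 0 * gaussMap (θ 0)) * (volume B).toReal := by
  have h0 : ∀ n, 0 < θ n := fun n => lt_of_le_of_ne (hθ n).1 (Ne.symm (hirr n).ne_zero)
  have h1 : ∀ n, θ n < 1 := fun n => lt_of_le_of_ne (hθ n).2 (hirr n).ne_one
  set cn : ℕ → ℝ := fun n => θ n * gaussMap (θ n) with hcn_def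
  have hgf := fun n => gauss_facts (h0 n) (h1 n) (hirr n)
  have hcpos : ∀ n, 0 < cn n := fun n => (hgf n).choose_spec.2.2.1
  have hchalf : ∀ n, cn n ≤ 1/2 := fun n => (hgf n).choose_spec.2.2.2
  set A : ℕ → Set ℝ := fun n => {x ∈ Icc (-1:ℝ) 1 | fiberComp θ n x ∈ B} with hA_def
  have hA0 : A 0 = B := by
    ext x
    simp only [hA_def, mem_setOf_eq, fiberComp, List.range_zero, List.foldr_nil]
    exact ⟨fun h => h.2, fun h => ⟨hBsub h, h⟩⟩
  have hAsub : ∀ n, A n ⊆ Icc (-1:ℝ) 1 := fun n x hx => hx.1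
  have hAsucc : ∀ n, A (n+1) = {x ∈ Icc (-1:ℝ) 1 | fiberMap (θ n) x ∈ A n} := by
    intro n
    ext x
    simp only [hA_def, mem_setOf_eq]
    constructor
    · rintro ⟨hx, hfx⟩
      rw [fiberComp_succ] at hfx
      exact ⟨hx, fiberMap_mem (h0 n) (h1 n) (hirr n) hx, hfx⟩
    · rintro ⟨hx, _, hfy⟩
      exact ⟨hx, by rw [fiberComp_succ]; exact hfy⟩
  have hmeas : ∀ n, MeasurableSet (A n) := by
    intro n
    induction n with
    | zero => rw [hA0]; exact hBm
    | succ n ih =>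
      rw [hAsucc n]
      exact (step_lemma (h0 n) (h1 n) (hirr n) (A n) ih (hAsub n)).1
  have hfin : ∀ S : Set ℝ, S ⊆ Icc (-1:ℝ) 1 → volume S ≠ ⊤ := fun S hS =>
    ((measure_mono hS).trans_lt measure_Icc_lt_top).ne
  set p : ℕ → ℝ := fun n => (volume (A n ∩ Ici 0)).toReal with hp_def
  set q : ℕ → ℝ := fun n => (volume (A n ∩ Iio 0)).toReal with hq_def
  have hfinP : ∀ n, volume (A n ∩ Ici 0) ≠ ⊤ :=
    fun n => hfin _ (inter_subset_left.trans (hAsub n))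
  have hfinN : ∀ n, volume (A n ∩ Iio 0) ≠ ⊤ :=
    fun n => hfin _ (inter_subset_left.trans (hAsub n))
  have hstep := fun n => step_lemma (h0 n) (h1 n) (hirr n) (A n) (hmeas n) (hAsub n)
  have hprec : ∀ n, p (n+1) = cn n * q n + (1 - cn n) * p n := by
    intro n
    have := (hstep n).2.1
    rw [← hAsucc n] at this
    simp only [hp_def, hq_def]
    rw [this, ENNReal.toReal_add (ENNReal.mul_ne_top ENNReal.ofReal_ne_top (hfinN n))
      (ENNReal.mul_ne_top ENNReal.ofReal_ne_top (hfinP n)),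
      ENNReal.toReal_mul, ENNReal.toReal_mul,
      ENNReal.toReal_ofReal (hcpos n).le,
      ENNReal.toReal_ofReal (by linarith [hchalf n] : (0:ℝ) ≤ 1 - cn n)]
  have hqrec : ∀ n, q (n+1) = p n := by
    intro n
    have := (hstep n).2.2
    rw [← hAsucc n] at this
    simp only [hp_def, hq_def]
    rw [this]
  have hvol : ∀ n, (volume (A n)).toReal = p n + q n := by
    intro n
    have hsplit : volume (A n ∩ Ici 0) + volume (A n \ Ici 0) = volume (A n) :=
      measure_inter_add_diff _ measurableSet_Ici
    have hdiff : A n \ Ici 0 = A n ∩ Iio 0 := by rw [diff_eq, compl_Ici]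
    rw [hdiff] at hsplit
    rw [← hsplit, ENNReal.toReal_add (hfinP n) (hfinN n)]
  obtain ⟨L, hL, hl, hu⟩ := seq_limit cn p q hcpos hchalf
    (fun n => ENNReal.toReal_nonneg) (fun n => ENNReal.toReal_nonneg) hprec hqrec
  have hB0 : (volume B).toReal = p 0 + q 0 := by rw [← hA0]; exact hvol 0
  refine ⟨L, ?_, ?_, ?_⟩
  · exact (hL.congr fun n => (hvol n).symm)
  · rw [hB0]; exact hl
  · rw [hB0]; exact hu
end
end

section
/- There exist constants C>0 and 0<λ<1 such that every Markov n-tile W of the skew product T satisfies diam(W) < C·λ^n. -/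
noncomputable section

open Set Filter MeasureTheory Topology

/-- `R⁺ = (0,1) × (0,1)`. -/
def Rplus : Set (ℝ × ℝ) := Ioo (0 : ℝ) 1 ×ˢ Ioo (0 : ℝ) 1

/-- `R⁻ = (0,1) × (-1,0)`. -/
def Rminus : Set (ℝ × ℝ) := Ioo (0 : ℝ) 1 ×ˢ Ioo (-1 : ℝ) 0

/-- The trapezoid atoms `V_{k,ℓ}` of the Markov partition. -/
def atomV (k l : ℕ) : Set (ℝ × ℝ) :=
  {p | 1 / ((k : ℝ) + 1) < p.1 ∧ p.1 < 1 / (k : ℝ) ∧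
    1 - ((l : ℝ) + 1) * p.1 < p.2 ∧ p.2 < 1 - (l : ℝ) * p.1}

/-- The triangle atoms `U_k` of the Markov partition. -/
def atomU (k : ℕ) : Set (ℝ × ℝ) :=
  {p | 1 / ((k : ℝ) + 1) < p.1 ∧ p.1 < 1 / (k : ℝ) ∧ 0 < p.2 ∧ p.2 < 1 - (k : ℝ) * p.1}

/-- The rectangle atoms `R_k` of the Markov partition. -/
def atomR (k : ℕ) : Set (ℝ × ℝ) :=
  {p | 1 / ((k : ℝ) + 1) < p.1 ∧ p.1 < 1 / (k : ℝ) ∧ -1 < p.2 ∧ p.2 < 0}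

/-- The atoms of the Markov partition for `T`. -/
def markovAtoms : Set (Set (ℝ × ℝ)) :=
  {A | (∃ k : ℕ, 1 ≤ k ∧ A = atomU k) ∨ (∃ k : ℕ, 1 ≤ k ∧ A = atomR k) ∨
    (∃ k l : ℕ, 1 ≤ k ∧ l < k ∧ A = atomV k l)}

/-- A Markov `n`-tile: an open subset `W ⊆ R` such that each image `T^j(W)` (`j < n`) lies in a
single Markov atom, and `T^n` maps `W` bijectively onto `R⁺` or onto `R⁻`. -/
def IsMarkovTile (n : ℕ) (W : Set (ℝ × ℝ)) : Prop :=
  IsOpen W ∧ W ⊆ Rect ∧ (∀ j < n, ∃ A ∈ markovAtoms, skewProd^[j] '' W ⊆ A) ∧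
    (Set.BijOn skewProd^[n] W Rplus ∨ Set.BijOn skewProd^[n] W Rminus)

lemma fract_eq_sub_nat {r : ℝ} {k : ℕ} (h1 : (k:ℝ) ≤ r) (h2 : r < (k:ℝ)+1) :
    Int.fract r = r - k := by
  have h : Int.fract (r - (k:ℤ)) = Int.fract r := Int.fract_sub_intCast r (k:ℤ)
  have h' : Int.fract (r - (k:ℤ)) = r - (k:ℤ) := by
    rw [Int.fract_eq_self]
    constructor <;> push_cast <;> linarith
  push_cast at h h'
  linarith [h, h']

lemma gauss_on_interval {k : ℕ} (hk : 1 ≤ k) {r : ℝ} (h1 : 1/((k:ℝ)+1) < r) (h2 : r < 1/(k:ℝ)) :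
    0 < r ∧ r < 1 ∧ gaussMap r = 1/r - k ∧ 0 ≤ gaussMap r ∧ gaussMap r < 1 ∧
      r * gaussMap r = 1 - k*r ∧ 0 < 1 - k*r ∧ 1 - k*r ≤ 1/2 ∧ (k:ℝ)*r ≤ 1 := by
  have hk1 : (1:ℝ) ≤ (k:ℝ) := by exact_mod_cast hk
  have hk0 : (0:ℝ) < (k:ℝ) := by linarith
  have hr0 : 0 < r := lt_trans (by positivity) h1
  have hrk : (k:ℝ) * r < 1 := by
    have := (lt_div_iff₀ hk0).1 h2
    linarith
  have hrk1 : 1 < ((k:ℝ)+1) * r := by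
    have := (div_lt_iff₀ (by positivity : (0:ℝ) < (k:ℝ)+1)).1 h1
    linarith
  have hinv1 : (k:ℝ) < 1/r := by
    rw [lt_div_iff₀ hr0]; linarith
  have hinv2 : 1/r < (k:ℝ)+1 := by
    rw [div_lt_iff₀ hr0]; linarith
  have hG : gaussMap r = 1/r - k := by
    rw [gaussMap, if_neg (ne_of_gt hr0)]
    exact fract_eq_sub_nat (le_of_lt hinv1) hinv2
  have hrG : r * gaussMap r = 1 - k*r := by
    rw [hG]; field_simp
  have hpos : 0 < 1 - (k:ℝ)*r := by linarith
  have hhalf : 1 - (k:ℝ)*r ≤ 1/2 := by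
    have : (k:ℝ)/((k:ℝ)+1) < (k:ℝ)*r := by
      rw [div_lt_iff₀ (by positivity : (0:ℝ) < (k:ℝ)+1)]
      nlinarith
    have h12 : (1:ℝ)/2 ≤ (k:ℝ)/((k:ℝ)+1) := by
      rw [div_le_div_iff₀ (by norm_num) (by positivity)]; linarith
    linarith
  have hr1 : r < 1 := by
    calc r < 1/(k:ℝ) := h2
    _ ≤ 1 := by rw [div_le_one hk0]; linarith
  refine ⟨hr0, hr1, hG, ?_, ?_, hrG, hpos, hhalf, le_of_lt hrk⟩
  · rw [hG]; linarith
  · rw [hG]; linarith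

lemma rho_facts {k : ℕ} (hk : 1 ≤ k) {x y : ℝ×ℝ}
    (hx1 : 1/((k:ℝ)+1) < x.1) (hx2 : x.1 < 1/(k:ℝ))
    (hy1 : 1/((k:ℝ)+1) < y.1) (hy2 : y.1 < 1/(k:ℝ)) :
    0 < x.1 ∧ x.1 < 1 ∧ x.1 * (skewProd x).1 ≤ 1/2 ∧
    |x.1 - y.1| = x.1 * y.1 * |(skewProd x).1 - (skewProd y).1| ∧
    (k:ℝ) * |x.1 - y.1| ≤ |(skewProd x).1 - (skewProd y).1| := by
  obtain ⟨hx0, hxlt1, hGx, hGx0, hGx1, hxG, hxpos, hxhalf, hxk⟩ := gauss_on_interval hk hx1 hx2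
  obtain ⟨hy0, hylt1, hGy, hGy0, hGy1, hyG, hypos, hyhalf, hyk⟩ := gauss_on_interval hk hy1 hy2
  have hS1 : ∀ z : ℝ×ℝ, (skewProd z).1 = gaussMap z.1 := fun _ => rfl
  have hdiff : (skewProd x).1 - (skewProd y).1 = (y.1 - x.1)/(x.1*y.1) := by
    rw [hS1, hS1, hGx, hGy]
    field_simp
    ring
  have heq : |x.1 - y.1| = x.1 * y.1 * |(skewProd x).1 - (skewProd y).1| := by
    rw [hdiff, abs_div, abs_of_pos (mul_pos hx0 hy0), abs_sub_comm]
    field_simp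
  refine ⟨hx0, hxlt1, ?_, heq, ?_⟩
  · rw [hS1]; linarith
  · rw [heq]
    have habs : 0 ≤ |(skewProd x).1 - (skewProd y).1| := abs_nonneg _
    have : (k:ℝ) * (x.1 * y.1) ≤ 1 := by nlinarith
    nlinarith

set_option maxHeartbeats 2000000 in
lemma step_facts {A : Set (ℝ×ℝ)} (hA : A ∈ markovAtoms) {x y : ℝ×ℝ} (hx : x ∈ A) (hy : y ∈ A) :
    0 < x.1 ∧ x.1 < 1 ∧ -1 < x.2 ∧ x.2 < 1 ∧ x.1 * (skewProd x).1 ≤ 1/2 ∧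
    |x.1 - y.1| = x.1 * y.1 * |(skewProd x).1 - (skewProd y).1| ∧
    ∃ m : ℝ, 0 ≤ m ∧ m ≤ 1 ∧
      |x.2 - y.2| ≤ m * |(skewProd x).2 - (skewProd y).2| + |(skewProd x).1 - (skewProd y).1| ∧
      (m ≤ 1/2 ∨ (0 ≤ (skewProd x).2 ∧ (m ≤ x.1 ∨ x.2 < 0))) := by
  have hS1 : ∀ z : ℝ×ℝ, (skewProd z).1 = gaussMap z.1 := fun _ => rfl
  have hS2 : ∀ z : ℝ×ℝ, (skewProd z).2 = fiberMap z.1 z.2 := fun _ => rfl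
  rcases hA with ⟨k, hk, rfl⟩ | ⟨k, hk, rfl⟩ | ⟨k, l, hk, hl, rfl⟩
  · -- atomU
    obtain ⟨hx1, hx2, hx3, hx4⟩ := hx
    obtain ⟨hy1, hy2, hy3, hy4⟩ := hy
    obtain ⟨hx0, hxlt1, hxhalf, heq, hkd⟩ := rho_facts hk hx1 hx2 hy1 hy2
    obtain ⟨_, _, hGx, hGx0, hGx1, hxG, hxpos, hxhalf', hxk⟩ := gauss_on_interval hk hx1 hx2
    obtain ⟨hy0, hylt1, hGy, hGy0, hGy1, hyG, hypos, hyhalf', hyk⟩ := gauss_on_interval hk hy1 hy2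
    have hfx : (skewProd x).2 = -x.2/(1 - k*x.1) := by
      rw [hS2, fiberMap, if_neg (ne_of_gt hx0), if_neg (not_le.2 hx3),
        if_pos (by rw [hxG]; linarith), hxG]
    have hfy : (skewProd y).2 = -y.2/(1 - k*y.1) := by
      rw [hS2, fiberMap, if_neg (ne_of_gt hy0), if_neg (not_le.2 hy3),
        if_pos (by rw [hyG]; linarith), hyG]
    refine ⟨hx0, hxlt1, by linarith, by linarith, hxhalf, heq, 1/2, by norm_num, by norm_num,
      ?_, Or.inl le_rfl⟩
    set a := (skewProd x).2
    set b := (skewProd y).2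
    have hxeq : x.2 = -a * (1 - k*x.1) := by
      rw [hfx]; field_simp
    have hyeq : y.2 = -b * (1 - k*y.1) := by
      rw [hfy]; field_simp
    have hdecomp : x.2 - y.2 = -(1 - k*x.1) * (a - b) + b * ((k:ℝ)*(x.1 - y.1)) := by
      linear_combination hxeq - hyeq
    have hb1 : |b| ≤ 1 := by
      rw [hfy, abs_div, abs_of_pos hypos]
      rw [div_le_one hypos, abs_neg, abs_of_pos hy3]
      linarith
    calc |x.2 - y.2| = |-(1 - k*x.1) * (a - b) + b * ((k:ℝ)*(x.1 - y.1))| := by rw [hdecomp]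
      _ ≤ |-(1 - k*x.1) * (a - b)| + |b * ((k:ℝ)*(x.1 - y.1))| := abs_add_le _ _
      _ = (1 - k*x.1) * |a - b| + |b| * ((k:ℝ) * |x.1 - y.1|) := by
          rw [abs_mul, abs_mul, abs_neg, abs_of_pos hxpos, abs_mul,
            abs_of_nonneg (by positivity : (0:ℝ) ≤ (k:ℝ))]
      _ ≤ (1/2) * |a - b| + 1 * |(skewProd x).1 - (skewProd y).1| := by
          have h1 : (1 - k*x.1) * |a - b| ≤ (1/2) * |a - b| :=
            mul_le_mul_of_nonneg_right hxhalf' (abs_nonneg _)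
          have h2 : |b| * ((k:ℝ) * |x.1 - y.1|) ≤ 1 * |(skewProd x).1 - (skewProd y).1| := by
            apply mul_le_mul hb1 hkd (by positivity) (by norm_num)
          linarith
      _ = (1/2) * |a - b| + |(skewProd x).1 - (skewProd y).1| := by ring
  · -- atomR
    obtain ⟨hx1, hx2, hx3, hx4⟩ := hx
    obtain ⟨hy1, hy2, hy3, hy4⟩ := hy
    obtain ⟨hx0, hxlt1, hxhalf, heq, hkd⟩ := rho_facts hk hx1 hx2 hy1 hy2
    have hy0 : 0 < y.1 := (gauss_on_interval hk hy1 hy2).1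
    have hfx : (skewProd x).2 = -x.2 := by
      rw [hS2, fiberMap, if_neg (ne_of_gt hx0), if_pos (le_of_lt hx4)]
    have hfy : (skewProd y).2 = -y.2 := by
      rw [hS2, fiberMap, if_neg (ne_of_gt hy0), if_pos (le_of_lt hy4)]
    refine ⟨hx0, hxlt1, hx3, by linarith, hxhalf, heq, 1, by norm_num, le_rfl, ?_,
      Or.inr ⟨by rw [hfx]; linarith, Or.inr hx4⟩⟩
    have : |x.2 - y.2| = |(skewProd x).2 - (skewProd y).2| := by
      rw [hfx, hfy, show -x.2 - -y.2 = -(x.2 - y.2) by ring, abs_neg]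
    rw [this]
    have := abs_nonneg ((skewProd x).1 - (skewProd y).1)
    linarith
  · -- atomV
    obtain ⟨hx1, hx2, hx3, hx4⟩ := hx
    obtain ⟨hy1, hy2, hy3, hy4⟩ := hy
    obtain ⟨hx0, hxlt1, hxhalf, heq, hkd⟩ := rho_facts hk hx1 hx2 hy1 hy2
    obtain ⟨_, _, hGx, hGx0, hGx1, hxG, hxpos, hxhalf', hxk⟩ := gauss_on_interval hk hx1 hx2
    obtain ⟨hy0, hylt1, hGy, hGy0, hGy1, hyG, hypos, hyhalf', hyk⟩ := gauss_on_interval hk hy1 hy2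
    have hlk : ((l:ℝ)+1) ≤ (k:ℝ) := by exact_mod_cast Nat.succ_le_of_lt hl
    have hl0 : (0:ℝ) ≤ (l:ℝ) := by positivity
    -- x.2 > 1 - k x.1 > 0
    have hxlow : 1 - (k:ℝ)*x.1 ≤ 1 - ((l:ℝ)+1)*x.1 := by nlinarith
    have hylow : 1 - (k:ℝ)*y.1 ≤ 1 - ((l:ℝ)+1)*y.1 := by nlinarith
    have hx2pos : 0 < x.2 := by linarith
    have hy2pos : 0 < y.2 := by linarith
    have hfract : ∀ z : ℝ×ℝ, 1/((k:ℝ)+1) < z.1 → z.1 < 1/(k:ℝ) →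
        1 - ((l:ℝ)+1) * z.1 < z.2 → z.2 < 1 - (l:ℝ) * z.1 →
        (skewProd z).2 = (1 - z.2)/z.1 - l := by
      intro z hz1 hz2 hz3 hz4
      obtain ⟨hz0, hzlt1, hGz, hGz0, hGz1, hzG, hzpos, hzhalf', hzk⟩ := gauss_on_interval hk hz1 hz2
      have hzlow : 1 - (k:ℝ)*z.1 ≤ 1 - ((l:ℝ)+1)*z.1 := by nlinarith
      have hz2pos : 0 < z.2 := by linarith
      have hnotle : ¬ (z.2 ≤ z.1 * gaussMap z.1) := by
        rw [hzG]; push_neg; linarith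
      rw [hS2, fiberMap, if_neg (ne_of_gt hz0), if_neg (not_le.2 hz2pos), if_neg hnotle]
      apply fract_eq_sub_nat
      · rw [le_div_iff₀ hz0]; linarith
      · rw [div_lt_iff₀ hz0]; linarith
    have hfx := hfract x hx1 hx2 hx3 hx4
    have hfy := hfract y hy1 hy2 hy3 hy4
    set a := (skewProd x).2 with ha
    set b := (skewProd y).2 with hb
    have ha0 : 0 < a := by
      rw [hfx, sub_pos, lt_div_iff₀ hx0]; linarith
    have hb0 : 0 < b := by
      rw [hfy, sub_pos, lt_div_iff₀ hy0]; linarith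
    have hb1 : b < 1 := by
      rw [hfy, sub_lt_iff_lt_add, div_lt_iff₀ hy0]; nlinarith
    have hxeq : x.2 = 1 - x.1 * (a + l) := by
      rw [hfx]; field_simp; ring
    have hyeq : y.2 = 1 - y.1 * (b + l) := by
      rw [hfy]; field_simp; ring
    refine ⟨hx0, hxlt1, by nlinarith, by nlinarith, hxhalf, heq, x.1, le_of_lt hx0,
      le_of_lt hxlt1, ?_, Or.inr ⟨le_of_lt ha0, Or.inl le_rfl⟩⟩
    have hdecomp : x.2 - y.2 = -x.1 * (a - b) + (b + l) * (y.1 - x.1) := by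
      linear_combination hxeq - hyeq
    calc |x.2 - y.2| = |-x.1 * (a - b) + (b + l) * (y.1 - x.1)| := by rw [hdecomp]
      _ ≤ |-x.1 * (a - b)| + |(b + l) * (y.1 - x.1)| := abs_add_le _ _
      _ = x.1 * |a - b| + (b + l) * |x.1 - y.1| := by
          rw [abs_mul, abs_mul, abs_neg, abs_of_pos hx0, abs_of_pos (by linarith : 0 < b + (l:ℝ)),
            abs_sub_comm y.1 x.1]
      _ ≤ x.1 * |a - b| + (k:ℝ) * |x.1 - y.1| := by
          have : (b + l) * |x.1 - y.1| ≤ (k:ℝ) * |x.1 - y.1| :=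
            mul_le_mul_of_nonneg_right (by linarith) (abs_nonneg _)
          linarith
      _ ≤ x.1 * |a - b| + |(skewProd x).1 - (skewProd y).1| := by linarith

lemma triple_bound {m0 m1 m2 : ℝ} (h00 : 0 ≤ m0) (h01 : m0 ≤ 1) (h10 : 0 ≤ m1) (h11 : m1 ≤ 1)
    (h20 : 0 ≤ m2) (h21 : m2 ≤ 1)
    (h : m0 ≤ 1/2 ∨ m1 ≤ 1/2 ∨ m2 ≤ 1/2 ∨ m1 * m2 ≤ 1/2) :
    m0 * (m1 * m2) ≤ 1/2 := by
  have key : m1 * m2 ≤ 1/2 → m0 * (m1 * m2) ≤ 1/2 := by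
    intro h'
    calc m0 * (m1 * m2) ≤ 1 * (1/2) := mul_le_mul h01 h' (mul_nonneg h10 h20) (by norm_num)
      _ = 1/2 := by norm_num
  rcases h with h | h | h | h
  · have h1 : m1 * m2 ≤ 1 := mul_le_one₀ h11 h20 h21
    calc m0 * (m1 * m2) ≤ (1/2) * 1 := mul_le_mul h h1 (mul_nonneg h10 h20) (by norm_num)
      _ = 1/2 := by norm_num
  · exact key (by
      calc m1 * m2 ≤ (1/2) * 1 := mul_le_mul h h21 h20 (by norm_num)
        _ = 1/2 := by norm_num)
  · exact key (by
      calc m1 * m2 ≤ 1 * (1/2) := mul_le_mul h11 h h20 (by norm_num)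
        _ = 1/2 := by norm_num)
  · exact key h

lemma prod4_bound {a b c d D B : ℝ} (hab : a * b ≤ 1/2) (hcd : c * d ≤ 1/2)
    (hab0 : 0 ≤ a * b) (hcd0 : 0 ≤ c * d) (hD : 0 ≤ D) (hDB : D ≤ B) :
    (a * b) * ((c * d) * D) ≤ (1/4) * B := by
  have inner : (c * d) * D ≤ (1/2) * B := mul_le_mul hcd hDB hD (by norm_num)
  calc (a * b) * ((c * d) * D) ≤ (1/2) * ((1/2) * B) :=
      mul_le_mul hab inner (mul_nonneg hcd0 hD) (by norm_num)
    _ = (1/4) * B := by ring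

set_option maxHeartbeats 1000000 in
lemma tile_dist {n : ℕ} {W : Set (ℝ × ℝ)} (hW : IsMarkovTile n W) {p q : ℝ × ℝ}
    (hp : p ∈ W) (hq : q ∈ W) : dist p q ≤ 500 * (4/5 : ℝ) ^ n := by
  set P : ℕ → ℝ × ℝ := fun j => skewProd^[j] p with hPdef
  set Q : ℕ → ℝ × ℝ := fun j => skewProd^[j] q with hQdef
  have hPsucc : ∀ j, P (j+1) = skewProd (P j) := fun j => Function.iterate_succ_apply' skewProd j p
  have hQsucc : ∀ j, Q (j+1) = skewProd (Q j) := fun j => Function.iterate_succ_apply' skewProd j q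
  have hatom : ∀ j, j < n → ∃ A ∈ markovAtoms, P j ∈ A ∧ Q j ∈ A := by
    intro j hj
    obtain ⟨A, hA, hsub⟩ := hW.2.2.1 j hj
    exact ⟨A, hA, hsub ⟨p, hp, rfl⟩, hsub ⟨q, hq, rfl⟩⟩
  have hend : (0 < (P n).1 ∧ (P n).1 < 1 ∧ -1 < (P n).2 ∧ (P n).2 < 1) ∧
      (0 < (Q n).1 ∧ (Q n).1 < 1 ∧ -1 < (Q n).2 ∧ (Q n).2 < 1) := by
    rcases hW.2.2.2 with hB | hB
    · obtain ⟨⟨a1, a2⟩, ⟨a3, a4⟩⟩ := hB.mapsTo hp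
      obtain ⟨⟨b1, b2⟩, ⟨b3, b4⟩⟩ := hB.mapsTo hq
      exact ⟨⟨a1, a2, by linarith, by linarith⟩, ⟨b1, b2, by linarith, by linarith⟩⟩
    · obtain ⟨⟨a1, a2⟩, ⟨a3, a4⟩⟩ := hB.mapsTo hp
      obtain ⟨⟨b1, b2⟩, ⟨b3, b4⟩⟩ := hB.mapsTo hq
      exact ⟨⟨a1, a2, by linarith, by linarith⟩, ⟨b1, b2, by linarith, by linarith⟩⟩
  have hstep : ∀ j, j < n →
      (0 < (P j).1 ∧ (P j).1 < 1 ∧ -1 < (P j).2 ∧ (P j).2 < 1 ∧ (P j).1 * (P (j+1)).1 ≤ 1/2 ∧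
       0 < (Q j).1 ∧ (Q j).1 < 1 ∧ -1 < (Q j).2 ∧ (Q j).2 < 1 ∧ (Q j).1 * (Q (j+1)).1 ≤ 1/2 ∧
       |(P j).1 - (Q j).1| = (P j).1 * (Q j).1 * |(P (j+1)).1 - (Q (j+1)).1| ∧
       ∃ m : ℝ, 0 ≤ m ∧ m ≤ 1 ∧
         |(P j).2 - (Q j).2| ≤ m * |(P (j+1)).2 - (Q (j+1)).2| + |(P (j+1)).1 - (Q (j+1)).1| ∧
         (m ≤ 1/2 ∨ (0 ≤ (P (j+1)).2 ∧ (m ≤ (P j).1 ∨ (P j).2 < 0)))) := by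
    intro j hj
    obtain ⟨A, hA, hPA, hQA⟩ := hatom j hj
    have h1 := step_facts hA hPA hQA
    have h2 := step_facts hA hQA hPA
    rw [hPsucc j, hQsucc j]
    exact ⟨h1.1, h1.2.1, h1.2.2.1, h1.2.2.2.1, h1.2.2.2.2.1, h2.1, h2.2.1, h2.2.2.1,
      h2.2.2.2.1, h2.2.2.2.2.1, h1.2.2.2.2.2.1, h1.2.2.2.2.2.2⟩
  have hbd : ∀ i, i ≤ n → |(P i).1 - (Q i).1| ≤ 1 ∧ |(P i).2 - (Q i).2| ≤ 2 := by
    intro i hi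
    rcases lt_or_eq_of_le hi with hlt | rfl
    · obtain ⟨a1, a2, a3, a4, _, b1, b2, b3, b4, _⟩ := hstep i hlt
      exact ⟨abs_le.mpr ⟨by linarith, by linarith⟩, abs_le.mpr ⟨by linarith, by linarith⟩⟩
    · obtain ⟨⟨a1, a2, a3, a4⟩, ⟨b1, b2, b3, b4⟩⟩ := hend
      exact ⟨abs_le.mpr ⟨by linarith, by linarith⟩, abs_le.mpr ⟨by linarith, by linarith⟩⟩
  have main : ∀ t j, j + t = n →
      |(P j).1 - (Q j).1| ≤ 2 * (4/5 : ℝ) ^ t ∧ |(P j).2 - (Q j).2| ≤ 500 * (4/5 : ℝ) ^ t := by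
    intro t
    induction t using Nat.strong_induction_on with
    | _ t ih =>
      intro j hj
      rcases t with _ | _ | _ | t
      · -- t = 0
        obtain ⟨h1, h2⟩ := hbd j (by omega)
        rw [pow_zero]
        constructor <;> linarith
      · -- t = 1
        have hjn : j < n := by omega
        obtain ⟨hP0, hP1, _, _, _, hQ0, hQ1, _, _, _, heq, m0, hm00, hm01, hrec0, _⟩ :=
          hstep j hjn
        obtain ⟨hD1, hE1⟩ := hbd (j+1) (by omega)
        have habs := abs_nonneg ((P (j+1)).1 - (Q (j+1)).1)
        constructor
        · rw [heq]
          have hle1 : (P j).1 * (Q j).1 ≤ 1 := mul_le_one₀ hP1.le hQ0.le hQ1.le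
          calc (P j).1 * (Q j).1 * |(P (j+1)).1 - (Q (j+1)).1| ≤ 1 * 1 :=
              mul_le_mul hle1 hD1 habs (by norm_num)
            _ ≤ 2 * (4/5 : ℝ) ^ 1 := by norm_num
        · have h1 : m0 * |(P (j+1)).2 - (Q (j+1)).2| ≤ 1 * 2 :=
            mul_le_mul hm01 hE1 (abs_nonneg _) (by norm_num)
          calc |(P j).2 - (Q j).2| ≤ m0 * |(P (j+1)).2 - (Q (j+1)).2| +
              |(P (j+1)).1 - (Q (j+1)).1| := hrec0
            _ ≤ 1 * 2 + 1 := by linarith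
            _ ≤ 500 * (4/5 : ℝ) ^ 1 := by norm_num
      · -- t = 2
        have hjn : j < n := by omega
        have hjn1 : j + 1 < n := by omega
        obtain ⟨hP0, hP1, _, _, hPh, hQ0, hQ1, _, _, hQh, heq, m0, hm00, hm01, hrec0, _⟩ :=
          hstep j hjn
        obtain ⟨hP0', hP1', _, _, _, hQ0', hQ1', _, _, _, heq', m1, hm10, hm11, hrec1, _⟩ :=
          hstep (j+1) hjn1
        obtain ⟨hD2, hE2⟩ := hbd (j+1+1) (by omega)
        obtain ⟨hD1, _⟩ := hbd (j+1) (by omega)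
        constructor
        · have habs := abs_nonneg ((P (j+1+1)).1 - (Q (j+1+1)).1)
          have hchain : |(P j).1 - (Q j).1| =
              ((P j).1 * (P (j+1)).1) * (((Q j).1 * (Q (j+1)).1) *
                |(P (j+1+1)).1 - (Q (j+1+1)).1|) := by
            rw [heq, heq']; ring
          rw [hchain]
          calc ((P j).1 * (P (j+1)).1) * (((Q j).1 * (Q (j+1)).1) *
                |(P (j+1+1)).1 - (Q (j+1+1)).1|) ≤ (1/4) * 1 :=
              prod4_bound hPh hQh (mul_nonneg hP0.le hP0'.le) (mul_nonneg hQ0.le hQ0'.le)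
                habs hD2
            _ ≤ 2 * (4/5 : ℝ) ^ 2 := by norm_num
        · have h1 : m1 * |(P (j+1+1)).2 - (Q (j+1+1)).2| ≤ 1 * 2 :=
            mul_le_mul hm11 hE2 (abs_nonneg _) (by norm_num)
          have hE1 : |(P (j+1)).2 - (Q (j+1)).2| ≤ 3 := by
            have habs := abs_nonneg ((P (j+1+1)).1 - (Q (j+1+1)).1)
            calc |(P (j+1)).2 - (Q (j+1)).2| ≤ m1 * |(P (j+1+1)).2 - (Q (j+1+1)).2| +
                |(P (j+1+1)).1 - (Q (j+1+1)).1| := hrec1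
              _ ≤ 1 * 2 + 1 := by linarith
              _ = 3 := by norm_num
          have h2 : m0 * |(P (j+1)).2 - (Q (j+1)).2| ≤ 1 * 3 :=
            mul_le_mul hm01 hE1 (abs_nonneg _) (by norm_num)
          calc |(P j).2 - (Q j).2| ≤ m0 * |(P (j+1)).2 - (Q (j+1)).2| +
              |(P (j+1)).1 - (Q (j+1)).1| := hrec0
            _ ≤ 1 * 3 + 1 := by linarith
            _ ≤ 500 * (4/5 : ℝ) ^ 2 := by norm_num
      · -- t + 3
        have hjn : j < n := by omega
        have hjn1 : j + 1 < n := by omega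
        have hjn2 : j + 2 < n := by omega
        obtain ⟨hP0, hP1, _, _, hPh, hQ0, hQ1, _, _, hQh, heq, m0, hm00, hm01, hrec0, hd0⟩ :=
          hstep j hjn
        obtain ⟨hP0', hP1', _, _, hPh', hQ0', hQ1', _, _, hQh', heq', m1, hm10, hm11, hrec1, hd1⟩ :=
          hstep (j+1) hjn1
        obtain ⟨hP0'', hP1'', _, _, hPh'', hQ0'', hQ1'', _, _, hQh'', heq'', m2, hm20, hm21,
          hrec2, hd2⟩ := hstep (j+2) hjn2
        have e21 : j + 1 + 1 = j + 2 := by omega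
        have e32 : j + 2 + 1 = j + 3 := by omega
        rw [e21] at hrec1 hd1 heq' hPh' hQh'
        rw [e32] at hrec2 hd2 heq'' hPh'' hQh''
        have ihm1 := ih (t+1) (by omega) (j+2) (by omega)
        have ihm2 := ih (t+2) (by omega) (j+1) (by omega)
        have ihm0 := ih t (by omega) (j+3) (by omega)
        have hpow0 : (0:ℝ) < (4/5 : ℝ) ^ t := by positivity
        have hpow1 : ((4:ℝ)/5) ^ (t+1) = (4/5) ^ t * (4/5) := by rw [pow_succ]
        have hpow2 : ((4:ℝ)/5) ^ (t+2) = (4/5) ^ t * (16/25) := by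
          rw [pow_add]; norm_num
        have hpow3 : ((4:ℝ)/5) ^ (t+3) = (4/5) ^ t * (64/125) := by
          rw [pow_add]; norm_num
        have hD3 : |(P (j+3)).1 - (Q (j+3)).1| ≤ 2 * (4/5 : ℝ) ^ t := ihm0.1
        have hE3 : |(P (j+3)).2 - (Q (j+3)).2| ≤ 500 * (4/5 : ℝ) ^ t := ihm0.2
        have hD2 : |(P (j+2)).1 - (Q (j+2)).1| ≤ 2 * (4/5 : ℝ) ^ (t+1) := ihm1.1
        have hD1 : |(P (j+1)).1 - (Q (j+1)).1| ≤ 2 * (4/5 : ℝ) ^ (t+2) := ihm2.1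
        constructor
        · -- rho bound
          have habs := abs_nonneg ((P (j+2)).1 - (Q (j+2)).1)
          have hchain : |(P j).1 - (Q j).1| =
              ((P j).1 * (P (j+1)).1) * (((Q j).1 * (Q (j+1)).1) *
                |(P (j+2)).1 - (Q (j+2)).1|) := by
            rw [heq, heq']; ring
          rw [hchain]
          calc ((P j).1 * (P (j+1)).1) * (((Q j).1 * (Q (j+1)).1) *
                |(P (j+2)).1 - (Q (j+2)).1|) ≤ (1/4) * (2 * (4/5 : ℝ) ^ (t+1)) :=
              prod4_bound hPh hQh (mul_nonneg hP0.le hP0'.le) (mul_nonneg hQ0.le hQ0'.le)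
                habs hD2
            _ ≤ 2 * (4/5 : ℝ) ^ (t+3) := by
                rw [hpow1, hpow3]; linarith
        · -- alpha bound
          have hM : m0 * (m1 * m2) ≤ 1/2 := by
            apply triple_bound hm00 hm01 hm10 hm11 hm20 hm21
            rcases hd0 with h0 | ⟨h0a, h0b⟩
            · exact Or.inl h0
            · rcases hd1 with h1 | ⟨h1a, h1b⟩
              · exact Or.inr (Or.inl h1)
              · have hm1P : m1 ≤ (P (j+1)).1 := by
                  rcases h1b with h | h
                  · exact h
                  · exfalso; linarith
                rcases hd2 with h2 | ⟨h2a, h2b⟩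
                · exact Or.inr (Or.inr (Or.inl h2))
                · have hm2P : m2 ≤ (P (j+2)).1 := by
                    rcases h2b with h | h
                    · exact h
                    · exfalso; linarith
                  refine Or.inr (Or.inr (Or.inr ?_))
                  have h12 : m1 * m2 ≤ (P (j+1)).1 * (P (j+2)).1 :=
                    mul_le_mul hm1P hm2P hm20 hP0'.le
                  linarith
          have E3 := abs_nonneg ((P (j+3)).2 - (Q (j+3)).2)
          have D3 := abs_nonneg ((P (j+3)).1 - (Q (j+3)).1)
          have D2 := abs_nonneg ((P (j+2)).1 - (Q (j+2)).1)
          have D1 := abs_nonneg ((P (j+1)).1 - (Q (j+1)).1)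
          have s1 : |(P (j+1)).2 - (Q (j+1)).2| ≤
              m1 * (m2 * |(P (j+3)).2 - (Q (j+3)).2| + |(P (j+3)).1 - (Q (j+3)).1|) +
                |(P (j+2)).1 - (Q (j+2)).1| := by
            have := mul_le_mul_of_nonneg_left hrec2 hm10
            linarith
          have s0 : |(P j).2 - (Q j).2| ≤
              m0 * (m1 * (m2 * |(P (j+3)).2 - (Q (j+3)).2| + |(P (j+3)).1 - (Q (j+3)).1|) +
                |(P (j+2)).1 - (Q (j+2)).1|) + |(P (j+1)).1 - (Q (j+1)).1| := by
            have := mul_le_mul_of_nonneg_left s1 hm00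
            linarith
          have hterm1 : (m0 * (m1 * m2)) * |(P (j+3)).2 - (Q (j+3)).2| ≤
              (1/2) * (500 * (4/5 : ℝ) ^ t) :=
            mul_le_mul hM hE3 E3 (by norm_num)
          have hm01' : m0 * m1 ≤ 1 := mul_le_one₀ hm01 hm10 hm11
          have hterm2 : (m0 * m1) * |(P (j+3)).1 - (Q (j+3)).1| ≤ 1 * (2 * (4/5 : ℝ) ^ t) :=
            mul_le_mul hm01' hD3 D3 (by norm_num)
          have hterm3 : m0 * |(P (j+2)).1 - (Q (j+2)).1| ≤ 1 * (2 * (4/5 : ℝ) ^ (t+1)) :=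
            mul_le_mul hm01 hD2 D2 (by norm_num)
          calc |(P j).2 - (Q j).2| ≤
              (m0 * (m1 * m2)) * |(P (j+3)).2 - (Q (j+3)).2| +
                (m0 * m1) * |(P (j+3)).1 - (Q (j+3)).1| +
                m0 * |(P (j+2)).1 - (Q (j+2)).1| + |(P (j+1)).1 - (Q (j+1)).1| :=
              s0.trans_eq (by ring)
            _ ≤ (1/2) * (500 * (4/5 : ℝ) ^ t) + 1 * (2 * (4/5 : ℝ) ^ t) +
                1 * (2 * (4/5 : ℝ) ^ (t+1)) + 2 * (4/5 : ℝ) ^ (t+2) := by linarith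
            _ ≤ 500 * (4/5 : ℝ) ^ (t+3) := by
                rw [hpow1, hpow2, hpow3]; linarith
  have h0 := main n 0 (by omega)
  rw [Prod.dist_eq, Real.dist_eq, Real.dist_eq]
  have hP0 : P 0 = p := rfl
  have hQ0 : Q 0 = q := rfl
  rw [← hP0, ← hQ0]
  apply max_le
  · have hpow0 : (0:ℝ) < (4/5 : ℝ) ^ n := by positivity
    have := h0.1
    linarith
  · exact h0.2

/-- **Lemma A.4.** There exist `C > 0` and `0 < λ < 1` such that every Markov `n`-tile `W`
satisfies `diam W < C λⁿ`. -/
theorem markovTilesDiam :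
    ∃ C : ℝ, 0 < C ∧ ∃ lam : ℝ, 0 < lam ∧ lam < 1 ∧
      ∀ (n : ℕ) (W : Set (ℝ × ℝ)), IsMarkovTile n W →
        Metric.diam W < C * lam ^ n := by
  refine ⟨1000, by norm_num, 4/5, by norm_num, by norm_num, ?_⟩
  intro n W hW
  have hdiam : Metric.diam W ≤ 500 * (4/5 : ℝ) ^ n :=
    Metric.diam_le_of_forall_dist_le (by positivity) (fun p hp q hq => tile_dist hW hp hq)
  have hpow : (0:ℝ) < (4/5 : ℝ) ^ n := by positivity
  calc Metric.diam W ≤ 500 * (4/5 : ℝ) ^ n := hdiam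
    _ < 1000 * (4/5 : ℝ) ^ n := by linarith
end
end
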